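/- Let P be a signed poset on [n] containing an element of the form e_i or -e_i for some i. Then the signed order polytope O_P has no interior lattice points, while the signed chain polytope C_P contains the origin as an interior point; in particular O_P and C_P have different Ehrhart polynomials. -/
import Mathlib


open Finset Pointwise

noncomputable section
attribute [local instance] Classical.propDecidable

/-- The `i`-th standard unit vector in `ℝ^n`. -/
def ee (n : ℕ) (i : Fin n) : Fin n → ℝ := fun j => if j = i then 1 else 0

/-- Standard inner product on `ℝ^n`. -/
def dot {n : ℕ} (a x : Fin n → ℝ) : ℝ := ∑ i, a i * x i

/-- The type-B root system `B_n`. -/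
def Bn (n : ℕ) : Set (Fin n → ℝ) :=
  {α | (∃ i : Fin n, α = ee n i ∨ α = -ee n i) ∨
       (∃ i j : Fin n, i < j ∧ (α = ee n i + ee n j ∨ α = -ee n i - ee n j ∨
          α = ee n i - ee n j ∨ α = -ee n i + ee n j))}

/-- The set of positive linear combinations of elements of `S`. -/
def PLC {n : ℕ} (S : Set (Fin n → ℝ)) : Set (Fin n → ℝ) :=
  {β | ∃ (m : ℕ) (c : Fin m → ℝ) (v : Fin m → (Fin n → ℝ)),
     (∀ k, 0 < c k) ∧ (∀ k, v k ∈ S) ∧ β = ∑ k, c k • v k}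

/-- A signed poset on `[n]`: a subset of `B_n` with antisymmetry, closed under
positive linear combinations within `B_n`. -/
def IsSignedPoset {n : ℕ} (P : Set (Fin n → ℝ)) : Prop :=
  P ⊆ Bn n ∧ (∀ α ∈ P, -α ∉ P) ∧ (∀ β ∈ Bn n, β ∈ PLC P → β ∈ P)

/-- The signed order cone `K_P`. -/
def orderCone {n : ℕ} (P : Set (Fin n → ℝ)) : Set (Fin n → ℝ) :=
  {x | ∀ α ∈ P, 0 ≤ dot α x}

/-- The signed order polytope `O_P = K_P ∩ [-1,1]^n`. -/
def orderPolytope {n : ℕ} (P : Set (Fin n → ℝ)) : Set (Fin n → ℝ) :=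
  {x | (∀ α ∈ P, 0 ≤ dot α x) ∧ ∀ i, -1 ≤ x i ∧ x i ≤ 1}

/-- The number of lattice points in the `t`-th dilate of `Q`. -/
def ehrCount {n : ℕ} (Q : Set (Fin n → ℝ)) (t : ℕ) : ℕ :=
  Set.ncard {x : Fin n → ℤ | ∃ q ∈ Q, ∀ i, (x i : ℝ) = (t : ℝ) * q i}

/-- The interior lattice points of the `t`-th dilate of `Q`. -/
def intLatticePts {n : ℕ} (Q : Set (Fin n → ℝ)) (t : ℕ) : Set (Fin n → ℤ) :=
  {x | (fun i => (x i : ℝ)) ∈ interior ((t : ℝ) • Q)}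

/-- The lattice points of the `t`-th dilate of `Q`. -/
def latticePts {n : ℕ} (Q : Set (Fin n → ℝ)) (t : ℕ) : Set (Fin n → ℤ) :=
  {x | (fun i => (x i : ℝ)) ∈ (t : ℝ) • Q}

/-- A lattice polytope `Q` is Gorenstein of index `k` if `(k-1)Q` has no interior
lattice points, `kQ` has exactly one, and `|tQ° ∩ ℤ^n| = |(t-k)Q ∩ ℤ^n|` for `t > k`. -/
def IsGorenstein {n : ℕ} (Q : Set (Fin n → ℝ)) (k : ℕ) : Prop :=
  0 < k ∧ intLatticePts Q (k - 1) = ∅ ∧ (intLatticePts Q k).ncard = 1 ∧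
  ∀ t : ℕ, k < t → (intLatticePts Q t).ncard = (latticePts Q (t - k)).ncard

/-- `(c, s)` is a chain of the signed poset `P`, consisting of `m + 1` elements
`c 0, ..., c m` of `[n]` and signs `s 0, ..., s (m-1)`. -/
def IsSChain {n : ℕ} (P : Set (Fin n → ℝ)) (m : ℕ) (c : Fin (m + 1) → Fin n)
    (s : Fin m → ℝ) : Prop :=
  (∀ i, s i = 1 ∨ s i = -1) ∧
  ∃ α : Fin m → (Fin n → ℝ),
    (∀ i : Fin m, α i ∈ P ∧
      ((s i = 1 ∧ (α i = ee n (c i.castSucc) - ee n (c i.succ) ∨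
                    α i = -(ee n (c i.castSucc) - ee n (c i.succ)))) ∨
       (s i = -1 ∧ (α i = ee n (c i.castSucc) + ee n (c i.succ) ∨
                    α i = -(ee n (c i.castSucc) + ee n (c i.succ)))))) ∧
    (∀ i : Fin m, ∀ h : (i : ℕ) + 1 < m, α i + α ⟨(i : ℕ) + 1, h⟩ ∈ P)

/-- The linear functional `x_{c_1} + s_1 x_{c_2} + s_1 s_2 x_{c_3} + ⋯` of a chain. -/
def chainFun {n m : ℕ} (c : Fin (m + 1) → Fin n) (s : Fin m → ℝ) (x : Fin n → ℝ) : ℝ :=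
  ∑ k : Fin (m + 1),
    (∏ l ∈ Finset.univ.filter (fun l : Fin m => (l : ℕ) < (k : ℕ)), s l) * x (c k)

/-- The signed chain polytope `C_P`. -/
def chainPolytope {n : ℕ} (P : Set (Fin n → ℝ)) : Set (Fin n → ℝ) :=
  {x | ∀ (m : ℕ) (c : Fin (m + 1) → Fin n) (s : Fin m → ℝ), IsSChain P m c s →
        -1 ≤ chainFun c s x ∧ chainFun c s x ≤ 1}

section Helpers

variable {n : ℕ}

lemma dot_ee_apply (a : Fin n) (y : Fin n → ℝ) : dot (ee n a) y = y a := by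
  unfold dot ee
  rw [Finset.sum_eq_single a]
  · simp
  · intro b _ hb; simp [hb]
  · simp

lemma dot_smul' (r : ℝ) (u y : Fin n → ℝ) : dot (r • u) y = r * dot u y := by
  unfold dot
  rw [Finset.mul_sum]
  congr 1; funext i; simp [mul_assoc]

lemma dot_sub' (u v y : Fin n → ℝ) : dot (u - v) y = dot u y - dot v y := by
  unfold dot
  rw [← Finset.sum_sub_distrib]
  congr 1; funext i; simp [sub_mul]

lemma dot_comb (p q : ℝ) (a b : Fin n) (y : Fin n → ℝ) :
    dot (p • ee n a - q • ee n b) y = p * y a - q * y b := by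
  rw [dot_sub', dot_smul', dot_smul', dot_ee_apply, dot_ee_apply]

lemma ee_self (a : Fin n) : ee n a a = 1 := by simp [ee]

lemma ee_ne (a b : Fin n) (h : b ≠ a) : ee n a b = 0 := by simp [ee, h]

lemma Bn_coord {β : Fin n → ℝ} (hβ : β ∈ Bn n) (v : Fin n) : |β v| ≤ 1 := by
  rcases hβ with ⟨i, hi | hi⟩ | ⟨i, j, hij, h4⟩
  · subst hi; unfold ee; split_ifs <;> norm_num
  · subst hi; simp only [Pi.neg_apply]; unfold ee; split_ifs <;> norm_num
  · have hne : i ≠ j := ne_of_lt hij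
    rcases h4 with h | h | h | h <;> subst h <;>
      simp only [Pi.add_apply, Pi.sub_apply, Pi.neg_apply] <;> unfold ee <;>
      split_ifs with h1 h2 <;>
      first
        | (exfalso; exact hne (h1 ▸ h2 ▸ rfl))
        | norm_num

lemma Bn_neg {β : Fin n → ℝ} (hβ : β ∈ Bn n) : -β ∈ Bn n := by
  rcases hβ with ⟨i, hi | hi⟩ | ⟨i, j, hij, h | h | h | h⟩
  · exact Or.inl ⟨i, Or.inr (by rw [hi])⟩
  · exact Or.inl ⟨i, Or.inl (by rw [hi, neg_neg])⟩
  · exact Or.inr ⟨i, j, hij, Or.inr (Or.inl (by rw [h]; abel))⟩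
  · exact Or.inr ⟨i, j, hij, Or.inl (by rw [h]; abel)⟩
  · exact Or.inr ⟨i, j, hij, Or.inr (Or.inr (Or.inr (by rw [h]; abel)))⟩
  · exact Or.inr ⟨i, j, hij, Or.inr (Or.inr (Or.inl (by rw [h]; abel)))⟩

lemma signBn {a b : Fin n} (hab : a ≠ b) {p q : ℝ} (hp : p = 1 ∨ p = -1)
    (hq : q = 1 ∨ q = -1) : p • ee n a - q • ee n b ∈ Bn n := by
  have key : ∀ (u v : Fin n → ℝ), p • ee n a - q • ee n b = u - v →
      True := fun _ _ _ => trivial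
  rcases lt_or_gt_of_ne hab with hlt | hgt
  · rcases hp with hp | hp <;> rcases hq with hq | hq <;> subst hp <;> subst hq
    · exact Or.inr ⟨a, b, hlt, Or.inr (Or.inr (Or.inl (by funext v; simp [Pi.sub_apply]; try ring)))⟩
    · exact Or.inr ⟨a, b, hlt, Or.inl (by funext v; simp [Pi.sub_apply, Pi.add_apply]; try ring)⟩
    · exact Or.inr ⟨a, b, hlt, Or.inr (Or.inl (by funext v; simp [Pi.sub_apply, Pi.add_apply]; try ring))⟩
    · exact Or.inr ⟨a, b, hlt, Or.inr (Or.inr (Or.inr (by funext v; simp [Pi.sub_apply, Pi.add_apply]; try ring)))⟩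
  · rcases hp with hp | hp <;> rcases hq with hq | hq <;> subst hp <;> subst hq
    · exact Or.inr ⟨b, a, hgt, Or.inr (Or.inr (Or.inr (by funext v; simp [Pi.sub_apply, Pi.add_apply]; try ring)))⟩
    · exact Or.inr ⟨b, a, hgt, Or.inl (by funext v; simp [Pi.sub_apply, Pi.add_apply]; try ring)⟩
    · exact Or.inr ⟨b, a, hgt, Or.inr (Or.inl (by funext v; simp [Pi.sub_apply, Pi.add_apply]; try ring))⟩
    · exact Or.inr ⟨b, a, hgt, Or.inr (Or.inr (Or.inl (by funext v; simp [Pi.sub_apply, Pi.add_apply]; try ring)))⟩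

variable {P : Set (Fin n → ℝ)}

lemma P_zero (hP : IsSignedPoset P) : (0 : Fin n → ℝ) ∉ P := by
  intro h0
  exact hP.2.1 0 h0 (by rwa [neg_zero])

lemma PLC_sum_Ico (f : ℕ → (Fin n → ℝ)) {a b : ℕ}
    (hf : ∀ l ∈ Finset.Ico a b, f l ∈ P) :
    (∑ l ∈ Finset.Ico a b, f l) ∈ PLC P := by
  refine ⟨b - a, fun _ => 1, fun k => f (a + (k : ℕ)), fun _ => one_pos, ?_, ?_⟩
  · intro k
    apply hf
    simp only [Finset.mem_Ico]
    have := k.isLt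
    omega
  · simp only [one_smul]
    rw [Finset.sum_Ico_eq_sum_range, Fin.sum_univ_eq_sum_range (fun i => f (a + i)) (b - a)]

end Helpers
section Master

variable {n : ℕ}

def sE (m : ℕ) (s : Fin m → ℝ) : ℕ → ℝ := fun l => if h : l < m then s ⟨l, h⟩ else 1

def aE (m : ℕ) (α : Fin m → Fin n → ℝ) : ℕ → Fin n → ℝ :=
  fun l => if h : l < m then α ⟨l, h⟩ else 0

def cE (m : ℕ) (c : Fin (m + 1) → Fin n) : ℕ → Fin n :=
  fun k => if h : k < m + 1 then c ⟨k, h⟩ else c ⟨0, Nat.succ_pos m⟩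

def etaE (m : ℕ) (c : Fin (m + 1) → Fin n) (s : Fin m → ℝ) (α : Fin m → Fin n → ℝ) : ℕ → ℝ :=
  fun k => (if 0 < m then aE m α 0 (cE m c 0) else 1) * ∏ l ∈ Finset.range k, sE m s l

lemma cE_eq (m : ℕ) (c : Fin (m + 1) → Fin n) (k : Fin (m + 1)) : cE m c (k : ℕ) = c k := by
  simp only [cE, dif_pos k.isLt]

lemma sE_eq (m : ℕ) (s : Fin m → ℝ) (l : Fin m) : sE m s (l : ℕ) = s l := by
  simp only [sE, dif_pos l.isLt]

variable {P : Set (Fin n → ℝ)}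

lemma master (hP : IsSignedPoset P) {m : ℕ} {c : Fin (m + 1) → Fin n} {s : Fin m → ℝ}
    (hcs : IsSChain P m c s) :
    ∃ η : Fin (m + 1) → ℝ, (∀ k, η k = 1 ∨ η k = -1) ∧
      (∀ x : Fin n → ℝ, chainFun c s x = η 0 * ∑ k, η k * x (c k)) ∧
      (∀ j k : Fin (m + 1), j < k → c j = c k → η j = -η k) ∧
      (∀ j k : Fin (m + 1), j < k → c j ≠ c k →
        η j • ee n (c j) - η k • ee n (c k) ∈ P) := by
  obtain ⟨hs, α, hα, hsum⟩ := hcs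
  set sE' := sE m s with hsE'
  set aE' := aE m α with haE'
  set cE' := cE m c with hcE'
  set ηE := etaE m c s α with hηE
  -- basic sign facts
  have hsE1 : ∀ l, sE' l = 1 ∨ sE' l = -1 := by
    intro l
    by_cases h : l < m
    · simpa only [hsE', sE, dif_pos h] using hs ⟨l, h⟩
    · exact Or.inl (by simp only [hsE', sE, dif_neg h])
  have haP : ∀ l, l < m → aE' l ∈ P := by
    intro l hl
    simpa only [haE', aE, dif_pos hl] using (hα ⟨l, hl⟩).1
  -- Shape lemma
  have hshape : ∀ k, ∀ hk : k < m, ∃ e : ℝ, (e = 1 ∨ e = -1) ∧ cE' k ≠ cE' (k + 1) ∧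
      aE' k = e • ee n (cE' k) - (e * sE' k) • ee n (cE' (k + 1)) ∧ (aE' k) (cE' k) = e := by
    intro k hk
    have hk1 : k < m + 1 := by omega
    have hk2 : k + 1 < m + 1 := by omega
    have hcast : (⟨k, hk⟩ : Fin m).castSucc = (⟨k, hk1⟩ : Fin (m + 1)) := rfl
    have hsucc : (⟨k, hk⟩ : Fin m).succ = (⟨k + 1, hk2⟩ : Fin (m + 1)) := rfl
    have hceq1 : cE' k = c ⟨k, hk1⟩ := by simp only [hcE', cE, dif_pos hk1]
    have hceq2 : cE' (k + 1) = c ⟨k + 1, hk2⟩ := by simp only [hcE', cE, dif_pos hk2]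
    have haeq : aE' k = α ⟨k, hk⟩ := by simp only [haE', aE, dif_pos hk]
    have hseq : sE' k = s ⟨k, hk⟩ := by simp only [hsE', sE, dif_pos hk]
    obtain ⟨hmem, hform⟩ := hα ⟨k, hk⟩
    rw [hcast, hsucc] at hform
    set a := c ⟨k, hk1⟩ with ha
    set b := c ⟨k + 1, hk2⟩ with hb
    rw [hceq1, hceq2, haeq, hseq]
    have hBn : α ⟨k, hk⟩ ∈ Bn n := hP.1 hmem
    rcases hform with ⟨hs1, he | he⟩ | ⟨hs1, he | he⟩
    · -- s = 1, α = ee a - ee b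
      have hab : a ≠ b := by
        intro hab
        apply P_zero hP
        rw [he, hab, sub_self] at hmem
        exact hmem
      refine ⟨1, Or.inl rfl, hab, ?_, ?_⟩
      · rw [he, hs1]; funext v
        simp [Pi.sub_apply, Pi.smul_apply, smul_eq_mul]
      · rw [he]; simp only [Pi.sub_apply]; rw [ee_self, ee_ne b a hab]; norm_num
    · -- s = 1, α = -(ee a - ee b)
      have hab : a ≠ b := by
        intro hab
        apply P_zero hP
        rw [he, hab, sub_self, neg_zero] at hmem
        exact hmem
      refine ⟨-1, Or.inr rfl, hab, ?_, ?_⟩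
      · rw [he, hs1]; funext v
        simp only [Pi.neg_apply, Pi.sub_apply, Pi.smul_apply, smul_eq_mul]; ring
      · rw [he]; simp only [Pi.neg_apply, Pi.sub_apply]
        rw [ee_self, ee_ne b a hab]; norm_num
    · -- s = -1, α = ee a + ee b
      have hab : a ≠ b := by
        intro hab
        have := Bn_coord hBn a
        rw [he, hab, Pi.add_apply, ee_self] at this
        norm_num at this
      refine ⟨1, Or.inl rfl, hab, ?_, ?_⟩
      · rw [he, hs1]; funext v
        simp only [Pi.add_apply, Pi.sub_apply, Pi.smul_apply, smul_eq_mul]; ring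
      · rw [he]; simp only [Pi.add_apply]
        rw [ee_self, ee_ne b a hab]; norm_num
    · -- s = -1, α = -(ee a + ee b)
      have hab : a ≠ b := by
        intro hab
        have := Bn_coord hBn a
        rw [he, hab, Pi.neg_apply, Pi.add_apply, ee_self] at this
        norm_num at this
      refine ⟨-1, Or.inr rfl, hab, ?_, ?_⟩
      · rw [he, hs1]; funext v
        simp only [Pi.neg_apply, Pi.add_apply, Pi.sub_apply, Pi.smul_apply, smul_eq_mul]; ring
      · rw [he]; simp only [Pi.neg_apply, Pi.add_apply]
        rw [ee_self, ee_ne b a hab]; norm_num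
  -- eta basic
  have hηE0 : ηE 0 = (if 0 < m then aE' 0 (cE' 0) else 1) := by
    simp [hηE, etaE, haE', hcE']
  have hηsucc : ∀ k, ηE (k + 1) = ηE k * sE' k := by
    intro k
    simp only [hηE, etaE, Finset.prod_range_succ, hsE']
    ring
  have hη1 : ∀ k, ηE k = 1 ∨ ηE k = -1 := by
    have h0 : ηE 0 = 1 ∨ ηE 0 = -1 := by
      rw [hηE0]
      by_cases hm : 0 < m
      · rw [if_pos hm]
        obtain ⟨e, he, _, _, hco⟩ := hshape 0 hm
        rw [hco]; exact he
      · rw [if_neg hm]; exact Or.inl rfl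
    intro k
    induction k with
    | zero => exact h0
    | succ k ih =>
      rw [hηsucc]
      rcases ih with h | h <;> rcases hsE1 k with h' | h' <;> rw [h, h'] <;> norm_num
  -- the sign of aE' k is ηE k
  have hQ : ∀ k, ∀ hk : k < m, (aE' k) (cE' k) = ηE k := by
    intro k
    induction k with
    | zero =>
      intro hk
      rw [hηE0, if_pos hk]
    | succ k ih =>
      intro hk1
      have hk : k < m := by omega
      obtain ⟨e, heval, hne, hfo, hco⟩ := hshape k hk
      have hek : e = ηE k := by rw [← hco, ih hk]
      obtain ⟨e', heval', hne', hfo', hco'⟩ := hshape (k + 1) hk1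
      -- γ = aE' k + aE' (k+1) ∈ P
      have hγ : aE' k + aE' (k + 1) ∈ P := by
        have := hsum ⟨k, hk⟩ (by simpa using hk1)
        have h1 : aE' k = α ⟨k, hk⟩ := by simp only [haE', aE, dif_pos hk]
        have h2 : aE' (k + 1) = α ⟨k + 1, hk1⟩ := by simp only [haE', aE, dif_pos hk1]
        rw [h1, h2]
        exact this
      have hcoord := Bn_coord (hP.1 hγ) (cE' (k + 1))
      have hval : (aE' k + aE' (k + 1)) (cE' (k + 1)) = e' - e * sE' k := by
        rw [Pi.add_apply, hfo, hfo']
        simp only [Pi.sub_apply, Pi.smul_apply, smul_eq_mul]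
        rw [ee_self, ee_ne (cE' k) (cE' (k+1)) (fun hh => hne hh.symm),
          ee_ne (cE' (k+2)) (cE' (k+1)) (fun hh => hne' hh)]
        ring
      rw [hval] at hcoord
      have hesk : e * sE' k = 1 ∨ e * sE' k = -1 := by
        rcases heval with h | h <;> rcases hsE1 k with h' | h' <;> rw [h, h'] <;> norm_num
      have he' : e' = e * sE' k := by
        rcases heval' with h | h <;> rcases hesk with h' | h' <;> rw [h, h'] <;>
          first | rfl | (rw [h, h'] at hcoord; norm_num at hcoord)
      rw [hco', he', hek, ← hηsucc]
  -- form in eta terms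
  have hB : ∀ l, l < m →
      aE' l = ηE l • ee n (cE' l) - ηE (l + 1) • ee n (cE' (l + 1)) := by
    intro l hl
    obtain ⟨e, _, _, hfo, hco⟩ := hshape l hl
    have he : e = ηE l := by rw [← hco, hQ l hl]
    rw [hfo, he, hηsucc]
  -- telescoping
  have htel : ∀ j k : ℕ, j ≤ k → k ≤ m →
      ∑ l ∈ Finset.Ico j k, aE' l =
        ηE j • ee n (cE' j) - ηE k • ee n (cE' k) := by
    intro j k hjk hkm
    induction k, hjk using Nat.le_induction with
    | base => simp
    | succ k hjk ih =>
      rw [Finset.sum_Ico_succ_top hjk, ih (by omega), hB k (by omega)]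
      abel
  refine ⟨fun k => ηE (k : ℕ), fun k => hη1 k, ?_, ?_, ?_⟩
  · -- chainFun formula
    intro x
    unfold chainFun
    rw [Finset.mul_sum]
    congr 1
    funext k
    have hprod : (∏ l ∈ Finset.univ.filter (fun l : Fin m => (l : ℕ) < (k : ℕ)), s l) =
        ∏ l ∈ Finset.range (k : ℕ), sE' l := by
      rw [Finset.prod_filter]
      have h1 : ∀ l : Fin m, (if (l : ℕ) < (k : ℕ) then s l else 1) =
          (fun j => if j < (k : ℕ) then sE' j else 1) (l : ℕ) := by
        intro l
        simp only [hsE', sE_eq]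
      rw [Finset.prod_congr rfl (fun l _ => h1 l),
        Fin.prod_univ_eq_prod_range (fun j => if j < (k : ℕ) then sE' j else 1) m]
      have hkm : (k : ℕ) ≤ m := by omega
      rw [Finset.range_eq_Ico, ← Finset.prod_Ico_consecutive _ (Nat.zero_le (k : ℕ)) hkm,
        ← Finset.range_eq_Ico]
      have h2 : ∏ l ∈ Finset.Ico (k : ℕ) m, (if l < (k : ℕ) then sE' l else 1) = 1 := by
        apply Finset.prod_eq_one
        intro l hl
        rw [Finset.mem_Ico] at hl
        rw [if_neg (by omega)]
      rw [h2, mul_one]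
      apply Finset.prod_congr rfl
      intro l hl
      rw [Finset.mem_range] at hl
      rw [if_pos hl]
    rw [hprod]
    have hsq : ηE 0 * ηE (k : ℕ) = ∏ l ∈ Finset.range (k : ℕ), sE' l := by
      have : ηE 0 * ηE (k : ℕ) = (ηE 0 * ηE 0) * ∏ l ∈ Finset.range (k : ℕ), sE' l := by
        simp only [hηE, etaE, Finset.prod_range_zero, mul_one, hsE', haE', hcE']
        ring
      rw [this]
      rcases hη1 0 with h | h <;> rw [h] <;> norm_num
    rw [← hsq]
    simp only [Fin.val_zero]
    ring
  · -- D1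
    intro j k hjk hc
    by_contra hne
    simp only at hne
    have hη : ηE (j : ℕ) = ηE (k : ℕ) := by
      rcases hη1 (j : ℕ) with h | h <;> rcases hη1 (k : ℕ) with h' | h' <;>
        rw [h, h'] <;> rw [h, h'] at hne <;> first | rfl | (exfalso; exact hne (by norm_num))
    have hcE_eq : ∀ k : Fin (m + 1), cE' (k : ℕ) = c k := by
      intro k; rw [hcE']; exact cE_eq m c k
    have hzero : ∑ l ∈ Finset.Ico (j : ℕ) (k : ℕ), aE' l = 0 := by
      rw [htel (j : ℕ) (k : ℕ) (le_of_lt hjk) (by omega), hcE_eq, hcE_eq, hc, hη, sub_self]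
    have hjk' : (j : ℕ) < (k : ℕ) := hjk
    rw [Finset.sum_eq_sum_Ico_succ_bot hjk'] at hzero
    have hrest : ∑ l ∈ Finset.Ico ((j : ℕ) + 1) (k : ℕ), aE' l ∈ PLC P := by
      apply PLC_sum_Ico
      intro l hl
      rw [Finset.mem_Ico] at hl
      exact haP l (by omega)
    have hneg : -aE' (j : ℕ) = ∑ l ∈ Finset.Ico ((j : ℕ) + 1) (k : ℕ), aE' l :=
      add_eq_zero_iff_neg_eq.mp hzero
    have hjm : (j : ℕ) < m := by have := k.isLt; omega
    have hmem : -aE' (j : ℕ) ∈ P := by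
      apply hP.2.2
      · exact Bn_neg (hP.1 (haP (j : ℕ) hjm))
      · rw [hneg]; exact hrest
    exact hP.2.1 _ (haP (j : ℕ) hjm) hmem
  · -- D2
    intro j k hjk hc
    simp only
    have hcE_eq : ∀ k : Fin (m + 1), cE' (k : ℕ) = c k := by
      intro k; rw [hcE']; exact cE_eq m c k
    have h1 := htel (j : ℕ) (k : ℕ) (le_of_lt hjk) (by omega)
    rw [hcE_eq j, hcE_eq k] at h1
    have hPLC : ηE (j : ℕ) • ee n (c j) - ηE (k : ℕ) • ee n (c k) ∈ PLC P := by
      rw [← h1]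
      apply PLC_sum_Ico
      intro l hl
      rw [Finset.mem_Ico] at hl
      have := k.isLt
      exact haP l (by omega)
    exact hP.2.2 _ (signBn hc (hη1 (j : ℕ)) (hη1 (k : ℕ))) hPLC
lemma chain_card (hP : IsSignedPoset P) {m : ℕ} {c : Fin (m + 1) → Fin n} {s : Fin m → ℝ}
    (hcs : IsSChain P m c s) : m + 1 ≤ 2 * n := by
  obtain ⟨η, hη1, _, hD1, _⟩ := master hP hcs
  have hinj : Function.Injective
      (fun k : Fin (m + 1) => ((c k, if η k = 1 then true else false) : Fin n × Bool)) := by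
    intro j k hjk
    simp only [Prod.mk.injEq] at hjk
    by_contra hne
    rcases lt_or_gt_of_ne hne with h | h
    · have := hD1 j k h hjk.1
      rcases hη1 k with h' | h' <;> rw [h'] at this <;> rw [this, h'] at hjk <;>
        norm_num at hjk
    · have := hD1 k j h hjk.1.symm
      rcases hη1 j with h' | h' <;> rw [h'] at this <;> rw [this, h'] at hjk <;>
        norm_num at hjk
  have := Fintype.card_le_of_injective _ hinj
  simpa [Fintype.card_prod, mul_comm] using this

lemma chainFun_abs_le (hP : IsSignedPoset P) {m : ℕ} {c : Fin (m + 1) → Fin n}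
    {s : Fin m → ℝ} (hcs : IsSChain P m c s) {x : Fin n → ℝ} {M : ℝ} (hM0 : 0 ≤ M)
    (hM : ∀ v, |x v| ≤ M) : |chainFun c s x| ≤ (2 * n) * M := by
  obtain ⟨η, hη1, hfun, _, _⟩ := master hP hcs
  rw [hfun x, abs_mul]
  have hη0 : |η 0| = 1 := by rcases hη1 0 with h | h <;> rw [h] <;> norm_num
  rw [hη0, one_mul]
  calc |∑ k, η k * x (c k)| ≤ ∑ k, |η k * x (c k)| := Finset.abs_sum_le_sum_abs _ _
    _ ≤ ∑ _k : Fin (m + 1), M := by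
        apply Finset.sum_le_sum
        intro k _
        rw [abs_mul]
        have : |η k| = 1 := by rcases hη1 k with h | h <;> rw [h] <;> norm_num
        rw [this, one_mul]
        exact hM (c k)
    _ = (m + 1 : ℕ) * M := by
        rw [Finset.sum_const, Finset.card_univ, Fintype.card_fin, nsmul_eq_mul]
    _ ≤ (2 * n) * M := by
        apply mul_le_mul_of_nonneg_right _ hM0
        exact_mod_cast chain_card hP hcs

lemma origin_mem_interior (hP : IsSignedPoset P) (hn : 0 < n) :
    (fun _ : Fin n => (0 : ℝ)) ∈ interior (chainPolytope P) := by
  have hr : (0 : ℝ) < 1 / (2 * n + 1) := by positivity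
  rw [mem_interior]
  refine ⟨Metric.ball (fun _ : Fin n => (0 : ℝ)) (1 / (2 * n + 1)), ?_, Metric.isOpen_ball,
    Metric.mem_ball_self hr⟩
  intro x hx
  rw [Metric.mem_ball] at hx
  rw [dist_pi_lt_iff hr] at hx
  intro m c s hcs
  have hb : ∀ v, |x v| ≤ 1 / (2 * n + 1) := by
    intro v
    have := hx v
    rw [Real.dist_eq, sub_zero] at this
    exact le_of_lt this
  have := chainFun_abs_le hP hcs (le_of_lt hr) hb
  have hlt : (2 * n : ℝ) * (1 / (2 * n + 1)) < 1 := by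
    rw [mul_one_div, div_lt_one (by positivity)]
    linarith
  have habs : |chainFun c s x| < 1 := lt_of_le_of_lt this hlt
  have := abs_lt.mp habs
  constructor <;> linarith [this.1, this.2]

lemma no_interior_pts (hP : IsSignedPoset P) (i : Fin n) {σ : ℝ} (hσ : σ = 1 ∨ σ = -1)
    (hmem : σ • ee n i ∈ P) :
    {x : Fin n → ℤ | (fun v => (x v : ℝ)) ∈ interior (orderPolytope P)} = ∅ := by
  rw [Set.eq_empty_iff_forall_notMem]
  intro x hx
  simp only [Set.mem_setOf_eq] at hx
  set X : Fin n → ℝ := fun v => (x v : ℝ) with hX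
  obtain ⟨ε, hε, hball⟩ := Metric.isOpen_iff.mp isOpen_interior X hx
  have hσsq : σ * σ = 1 := by rcases hσ with h | h <;> rw [h] <;> norm_num
  have hσabs : |σ| = 1 := by rcases hσ with h | h <;> rw [h] <;> norm_num
  have hpert : ∀ τ : ℝ, |τ| ≤ ε / 2 → (X + τ • ee n i) ∈ orderPolytope P := by
    intro τ hτ
    apply interior_subset
    apply hball
    rw [Metric.mem_ball, dist_pi_lt_iff hε]
    intro v
    rw [Real.dist_eq]
    have : (X + τ • ee n i) v - X v = τ * ee n i v := by
      simp [Pi.add_apply, Pi.smul_apply, smul_eq_mul]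
    rw [this, abs_mul]
    have hee : |ee n i v| ≤ 1 := by unfold ee; split_ifs <;> norm_num
    calc |τ| * |ee n i v| ≤ (ε / 2) * 1 :=
          mul_le_mul hτ hee (abs_nonneg _) (by linarith)
      _ < ε := by linarith
  have h1 : 0 ≤ σ * (X i + (-(ε / 2) * σ)) := by
    have hy := hpert (-(ε / 2) * σ) (by rw [abs_mul, abs_neg, abs_of_pos (by linarith : (0:ℝ) < ε/2), hσabs, mul_one])
    have := hy.1 _ hmem
    rw [dot_smul', dot_ee_apply] at this
    convert this using 2
    simp [Pi.add_apply, Pi.smul_apply, smul_eq_mul, ee_self]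
  have h2 : σ * (X i + (ε / 2) * σ) ≤ 1 := by
    have hz := hpert ((ε / 2) * σ) (by rw [abs_mul, abs_of_pos (by linarith : (0:ℝ) < ε/2), hσabs, mul_one])
    have hcube := hz.2 i
    have hzi : (X + ((ε / 2) * σ) • ee n i) i = X i + (ε / 2) * σ := by
      simp [Pi.add_apply, Pi.smul_apply, smul_eq_mul, ee_self]
    rw [hzi] at hcube
    rcases hσ with h | h <;> subst h <;> nlinarith [hcube.1, hcube.2]
  have hlow : 0 < σ * X i := by nlinarith
  have hhigh : σ * X i < 1 := by nlinarith
  have hXi : X i = (x i : ℝ) := rfl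
  rw [hXi] at hlow hhigh
  rcases hσ with h | h <;> rw [h] at hlow hhigh
  · rw [one_mul] at hlow hhigh
    have l1 : 0 < x i := by exact_mod_cast hlow
    have l2 : x i < 1 := by exact_mod_cast hhigh
    omega
  · rw [neg_one_mul] at hlow hhigh
    have l1 : (x i : ℝ) < 0 := by linarith
    have l2 : -1 < (x i : ℝ) := by linarith
    have l1' : x i < 0 := by exact_mod_cast l1
    have l2' : -1 < x i := by exact_mod_cast l2
    omega
def relZ (P : Set (Fin n → ℝ)) (x : Fin n → ℤ) (v w : Fin n) : Prop :=
  ((x v : ℝ)) • ee n v - ((x w : ℝ)) • ee n w ∈ P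

def MinZ (P : Set (Fin n → ℝ)) (x : Fin n → ℤ) (v : Fin n) : Prop :=
  x v ≠ 0 ∧ ∀ w, x w = 0 ∨ ¬ relZ P x v w

def TZ (P : Set (Fin n → ℝ)) (x : Fin n → ℤ) : Fin n → ℤ :=
  fun v => if MinZ P x v then x v else 0

lemma PLC_two' {p q : Fin n → ℝ} (hp : p ∈ P) (hq : q ∈ P) : p + q ∈ PLC P := by
  refine ⟨2, fun _ => 1, ![p, q], fun _ => one_pos, ?_, ?_⟩
  · intro k; fin_cases k <;> simpa
  · simp [Fin.sum_univ_two]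

lemma cast_pm {x : Fin n → ℤ} (hx01 : ∀ v, x v = 0 ∨ x v = 1 ∨ x v = -1) {v : Fin n}
    (hv : x v ≠ 0) : ((x v : ℝ)) = 1 ∨ ((x v : ℝ)) = -1 := by
  rcases hx01 v with h | h | h
  · exact absurd h hv
  · left; rw [h]; norm_num
  · right; rw [h]; norm_num

lemma relZ_irrefl (hP : IsSignedPoset P) (x : Fin n → ℤ) (a : Fin n) : ¬ relZ P x a a := by
  intro hrel
  unfold relZ at hrel
  rw [sub_self] at hrel
  exact P_zero hP hrel

lemma relZ_anti (hP : IsSignedPoset P) {x : Fin n → ℤ} {a b : Fin n}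
    (h1 : relZ P x a b) (h2 : relZ P x b a) : False := by
  apply hP.2.1 _ h1
  rw [neg_sub]
  exact h2

lemma relZ_trans (hP : IsSignedPoset P) {x : Fin n → ℤ}
    (hx01 : ∀ v, x v = 0 ∨ x v = 1 ∨ x v = -1) {a b c : Fin n}
    (ha : x a ≠ 0) (hc : x c ≠ 0) (hac : a ≠ c)
    (h1 : relZ P x a b) (h2 : relZ P x b c) : relZ P x a c := by
  apply hP.2.2
  · exact signBn hac (cast_pm hx01 ha) (cast_pm hx01 hc)
  · have hid : ((x a : ℝ)) • ee n a - ((x c : ℝ)) • ee n c =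
        (((x a : ℝ)) • ee n a - ((x b : ℝ)) • ee n b) +
        (((x b : ℝ)) • ee n b - ((x c : ℝ)) • ee n c) := by abel
    rw [hid]
    exact PLC_two' h1 h2

lemma descend (hP : IsSignedPoset P) {x : Fin n → ℤ}
    (hx01 : ∀ v, x v = 0 ∨ x v = 1 ∨ x v = -1) (v : Fin n) (hv : x v ≠ 0) :
    ∀ (N : ℕ) (u : Fin n),
      (Finset.univ.filter (fun w => x w ≠ 0 ∧ relZ P x u w)).card ≤ N →
      x u ≠ 0 → (u = v ∨ relZ P x v u) →
      ∃ w, MinZ P x w ∧ (w = v ∨ relZ P x v w) := by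
  intro N
  induction N using Nat.strong_induction_on with
  | _ N ih =>
    intro u hcard hu hinv
    by_cases hMin : MinZ P x u
    · exact ⟨u, hMin, hinv⟩
    · unfold MinZ at hMin
      push_neg at hMin
      obtain ⟨w₀, hw0, hrel⟩ := hMin hu
      have hinv' : w₀ = v ∨ relZ P x v w₀ := by
        rcases hinv with rfl | hvu
        · right; exact hrel
        · by_cases hw0v : w₀ = v
          · exact absurd (hw0v ▸ hrel) (fun hh => relZ_anti hP hvu hh)
          · exact Or.inr (relZ_trans hP hx01 hv hw0 (fun hh => hw0v hh.symm) hvu hrel)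
      have hsub : (Finset.univ.filter (fun w => x w ≠ 0 ∧ relZ P x w₀ w)) ⊂
          (Finset.univ.filter (fun w => x w ≠ 0 ∧ relZ P x u w)) := by
        constructor
        · intro w' hw'
          rw [Finset.mem_filter] at hw' ⊢
          obtain ⟨_, hw'0, hw'rel⟩ := hw'
          refine ⟨Finset.mem_univ _, hw'0, ?_⟩
          by_cases hw'u : w' = u
          · exact absurd (hw'u ▸ hw'rel) (fun hh => relZ_anti hP hrel hh)
          · exact relZ_trans hP hx01 hu hw'0 (fun hh => hw'u hh.symm) hrel hw'rel
        · intro hcontra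
          have hw0mem : w₀ ∈ Finset.univ.filter (fun w => x w ≠ 0 ∧ relZ P x u w) := by
            rw [Finset.mem_filter]; exact ⟨Finset.mem_univ _, hw0, hrel⟩
          have := hcontra hw0mem
          rw [Finset.mem_filter] at this
          exact relZ_irrefl hP x w₀ this.2.2
      exact ih _ (lt_of_lt_of_le (Finset.card_lt_card hsub) hcard) w₀ le_rfl hw0 hinv'

lemma TZ_cases (P : Set (Fin n → ℝ)) (x : Fin n → ℤ) (v : Fin n) :
    TZ P x v = 0 ∨ (MinZ P x v ∧ TZ P x v = x v) := by
  unfold TZ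
  by_cases h : MinZ P x v
  · exact Or.inr ⟨h, if_pos h⟩
  · exact Or.inl (if_neg h)

lemma recon (hP : IsSignedPoset P) {x : Fin n → ℤ}
    (hx01 : ∀ v, x v = 0 ∨ x v = 1 ∨ x v = -1)
    (hK : ∀ α ∈ P, 0 ≤ dot α (fun v => (x v : ℝ)))
    (v : Fin n) (ε : ℤ) (hε : ε = 1 ∨ ε = -1) :
    x v = ε ↔ (TZ P x v = ε ∨
      ∃ w, TZ P x w ≠ 0 ∧ ((ε : ℝ) • ee n v - ((TZ P x w : ℤ) : ℝ) • ee n w ∈ P)) := by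
  have hε0 : ε ≠ 0 := by rcases hε with h | h <;> omega
  constructor
  · intro hxv
    have hv0 : x v ≠ 0 := by rw [hxv]; exact hε0
    obtain ⟨w, hMinw, hwv⟩ := descend hP hx01 v hv0 _ v le_rfl hv0 (Or.inl rfl)
    rcases hwv with rfl | hrel
    · left; unfold TZ; rw [if_pos hMinw]; exact hxv
    · right
      refine ⟨w, ?_, ?_⟩
      · unfold TZ; rw [if_pos hMinw]; exact hMinw.1
      · unfold TZ; rw [if_pos hMinw]
        unfold relZ at hrel
        rw [hxv] at hrel
        exact hrel
  · intro hcase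
    rcases hcase with hTv | ⟨w, hw0, hwP⟩
    · rcases TZ_cases P x v with h | h
      · rw [h] at hTv; exact absurd hTv.symm hε0
      · rw [← h.2]; exact hTv
    · rcases TZ_cases P x w with h | h
      · exact absurd h hw0
      · rw [h.2] at hwP
        have hdot := hK _ hwP
        rw [dot_comb] at hdot
        have hw1 : ((x w : ℝ)) * ((x w : ℝ)) = 1 := by
          rcases cast_pm hx01 (h.1).1 with hh | hh <;> rw [hh] <;> norm_num
        have hεxv : (1 : ℝ) ≤ (ε : ℝ) * ((x v : ℝ)) := by nlinarith
        have hεxv' : (1 : ℤ) ≤ ε * x v := by exact_mod_cast hεxv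
        rcases hε with h' | h' <;> subst h' <;> rcases hx01 v with h'' | h'' | h'' <;> omega
lemma sum_pm_bound {N : ℕ} (τ : Fin N → ℝ) (hval : ∀ k, τ k = 0 ∨ τ k = 1 ∨ τ k = -1)
    (h1 : ∀ j k, j ≠ k → ¬(τ j = 1 ∧ τ k = 1))
    (h2 : ∀ j k, j ≠ k → ¬(τ j = -1 ∧ τ k = -1)) :
    |∑ k, τ k| ≤ 1 := by
  have hdecomp : ∀ k, τ k = (if τ k = 1 then (1 : ℝ) else 0) -
      (if τ k = -1 then (1 : ℝ) else 0) := by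
    intro k
    rcases hval k with h | h | h <;> rw [h] <;> norm_num
  rw [Finset.sum_congr rfl (fun k _ => hdecomp k), Finset.sum_sub_distrib,
    Finset.sum_boole, Finset.sum_boole]
  have hA : (Finset.univ.filter (fun k => τ k = 1)).card ≤ 1 := by
    rw [Finset.card_le_one]
    intro a ha b hb
    by_contra hne
    exact h1 a b hne ⟨(Finset.mem_filter.mp ha).2, (Finset.mem_filter.mp hb).2⟩
  have hB : (Finset.univ.filter (fun k => τ k = -1)).card ≤ 1 := by
    rw [Finset.card_le_one]
    intro a ha b hb
    by_contra hne
    exact h2 a b hne ⟨(Finset.mem_filter.mp ha).2, (Finset.mem_filter.mp hb).2⟩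
  have hA' : ((Finset.univ.filter (fun k => τ k = 1)).card : ℝ) ≤ 1 := by exact_mod_cast hA
  have hB' : ((Finset.univ.filter (fun k => τ k = -1)).card : ℝ) ≤ 1 := by exact_mod_cast hB
  have hA0 : (0 : ℝ) ≤ ((Finset.univ.filter (fun k => τ k = 1)).card : ℝ) := Nat.cast_nonneg _
  have hB0 : (0 : ℝ) ≤ ((Finset.univ.filter (fun k => τ k = -1)).card : ℝ) := Nat.cast_nonneg _
  rw [abs_le]
  constructor <;> linarith

lemma chain_bound_via_eta (hP : IsSignedPoset P) {m : ℕ} {c : Fin (m + 1) → Fin n}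
    {s : Fin m → ℝ} (hcs : IsSChain P m c s) (y : Fin n → ℝ)
    (hkey : ∀ (η : Fin (m + 1) → ℝ), (∀ k, η k = 1 ∨ η k = -1) →
      (∀ j k : Fin (m + 1), j < k → c j = c k → η j = -η k) →
      (∀ j k : Fin (m + 1), j < k → c j ≠ c k →
        η j • ee n (c j) - η k • ee n (c k) ∈ P) →
      (∀ k, η k * y (c k) = 0 ∨ η k * y (c k) = 1 ∨ η k * y (c k) = -1) ∧
      (∀ j k, j < k → ¬(η j * y (c j) = 1 ∧ η k * y (c k) = 1)) ∧
      (∀ j k, j < k → ¬(η j * y (c j) = -1 ∧ η k * y (c k) = -1))) :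
    -1 ≤ chainFun c s y ∧ chainFun c s y ≤ 1 := by
  obtain ⟨η, hη1, hfun, hD1, hD2⟩ := master hP hcs
  obtain ⟨hval, hone, hnegone⟩ := hkey η hη1 hD1 hD2
  have hsum := sum_pm_bound (fun k => η k * y (c k)) hval
    (by
      intro j k hjk hh
      rcases lt_or_gt_of_ne hjk with h | h
      · exact hone j k h hh
      · exact hone k j h ⟨hh.2, hh.1⟩)
    (by
      intro j k hjk hh
      rcases lt_or_gt_of_ne hjk with h | h
      · exact hnegone j k h hh
      · exact hnegone k j h ⟨hh.2, hh.1⟩)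
  have habs : |chainFun c s y| ≤ 1 := by
    rw [hfun y, abs_mul]
    have : |η 0| = 1 := by rcases hη1 0 with h | h <;> rw [h] <;> norm_num
    rw [this, one_mul]
    exact hsum
  exact abs_le.mp habs

lemma TZ_mem_C (hP : IsSignedPoset P) {x : Fin n → ℤ}
    (hx01 : ∀ v, x v = 0 ∨ x v = 1 ∨ x v = -1) :
    (fun v => ((TZ P x v : ℤ) : ℝ)) ∈ chainPolytope P := by
  intro m c s hcs
  apply chain_bound_via_eta hP hcs
  intro η hη1 hD1 hD2
  set y : Fin n → ℝ := fun v => ((TZ P x v : ℤ) : ℝ) with hy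
  have hy01 : ∀ v, y v = 0 ∨ y v = 1 ∨ y v = -1 := by
    intro v
    rcases TZ_cases P x v with h | h
    · left; simp [hy, h]
    · rcases hx01 v with h' | h' | h'
      · left; simp [hy, h.2, h']
      · right; left; simp [hy, h.2, h']
      · right; right; simp [hy, h.2, h']
  have hτval : ∀ k, η k * y (c k) = 0 ∨ η k * y (c k) = 1 ∨ η k * y (c k) = -1 := by
    intro k
    rcases hy01 (c k) with h | h | h <;> rcases hη1 k with h' | h' <;> rw [h, h'] <;> norm_num
  -- if τ k = 1 then x (c k) casts to η k and MinZ holds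
  have hpos : ∀ k, η k * y (c k) = 1 → ((x (c k) : ℝ)) = η k ∧ MinZ P x (c k) := by
    intro k hk
    rcases TZ_cases P x (c k) with h | h
    · exfalso; rw [hy] at hk; simp only [h] at hk; norm_num at hk
    · have hyk : y (c k) = ((x (c k) : ℝ)) := by rw [hy]; simp [h.2]
      rw [hyk] at hk
      refine ⟨?_, h.1⟩
      rcases hη1 k with h' | h' <;> rw [h'] at hk ⊢ <;> linarith
  have hneg : ∀ k, η k * y (c k) = -1 → ((x (c k) : ℝ)) = -η k ∧ MinZ P x (c k) := by
    intro k hk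
    rcases TZ_cases P x (c k) with h | h
    · exfalso; rw [hy] at hk; simp only [h] at hk; norm_num at hk
    · have hyk : y (c k) = ((x (c k) : ℝ)) := by rw [hy]; simp [h.2]
      rw [hyk] at hk
      refine ⟨?_, h.1⟩
      rcases hη1 k with h' | h' <;> rw [h'] at hk ⊢ <;> linarith
  have hx0 : ∀ k, MinZ P x (c k) → x (c k) ≠ 0 := fun k hm => hm.1
  refine ⟨hτval, ?_, ?_⟩
  · intro j k hjk ⟨hj, hk⟩
    obtain ⟨hXj, hMj⟩ := hpos j hj
    obtain ⟨hXk, hMk⟩ := hpos k hk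
    by_cases hc : c j = c k
    · have hD := hD1 j k hjk hc
      rw [hc] at hXj
      rw [hXk] at hXj
      rw [hD] at hXj
      rcases hη1 k with h' | h' <;> rw [h'] at hXj <;> norm_num at hXj
    · have hD := hD2 j k hjk hc
      have hrel : relZ P x (c j) (c k) := by
        unfold relZ
        rw [hXj, hXk]
        exact hD
      rcases hMj.2 (c k) with h0 | hnr
      · exact hMk.1 h0
      · exact hnr hrel
  · intro j k hjk ⟨hj, hk⟩
    obtain ⟨hXj, hMj⟩ := hneg j hj
    obtain ⟨hXk, hMk⟩ := hneg k hk
    by_cases hc : c j = c k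
    · have hD := hD1 j k hjk hc
      rw [hc] at hXj
      rw [hXk] at hXj
      rw [hD] at hXj
      rcases hη1 k with h' | h' <;> rw [h'] at hXj <;> norm_num at hXj
    · have hD := hD2 j k hjk hc
      have hrel : relZ P x (c k) (c j) := by
        unfold relZ
        rw [hXj, hXk]
        have hid : (-η k) • ee n (c k) - (-η j) • ee n (c j) =
            η j • ee n (c j) - η k • ee n (c k) := by
          rw [neg_smul, neg_smul]; abel
        rw [hid]
        exact hD
      rcases hMk.2 (c j) with h0 | hnr
      · exact hMj.1 h0
      · exact hnr hrel

lemma gstar_mem_C (hP : IsSignedPoset P) (i : Fin n) (σ : ℤ) (hσ : σ = 1 ∨ σ = -1) :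
    (fun v => (((if v = i then -σ else 0 : ℤ) : ℤ) : ℝ)) ∈ chainPolytope P := by
  intro m c s hcs
  apply chain_bound_via_eta hP hcs
  intro η hη1 hD1 hD2
  have hcast : ∀ v : Fin n, (((if v = i then -σ else 0 : ℤ) : ℤ) : ℝ) =
      if v = i then -(σ : ℝ) else 0 := by
    intro v; by_cases h : v = i <;> simp [h]
  have key : ∀ j k : Fin (m + 1), j < k →
      η j * (((if c j = i then -σ else 0 : ℤ) : ℤ) : ℝ) =
        η k * (((if c k = i then -σ else 0 : ℤ) : ℤ) : ℝ) →
      η j * (((if c j = i then -σ else 0 : ℤ) : ℤ) : ℝ) = 0 := by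
    intro j k hjk heq
    rw [hcast (c j), hcast (c k)] at heq
    rw [hcast (c j)]
    by_cases hcj : c j = i
    · by_cases hck : c k = i
      · exfalso
        rw [if_pos hcj, if_pos hck, hD1 j k hjk (hcj.trans hck.symm)] at heq
        rcases hσ with h' | h' <;> rcases hη1 k with h'' | h'' <;>
          rw [h', h''] at heq <;> norm_num at heq
      · rw [if_neg hck, mul_zero] at heq
        rw [if_pos hcj]
        rwa [if_pos hcj] at heq
    · rw [if_neg hcj, mul_zero]
  refine ⟨?_, ?_, ?_⟩
  · intro k
    rw [hcast (c k)]
    by_cases h : c k = i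
    · rw [if_pos h]
      rcases hσ with h' | h' <;> rcases hη1 k with h'' | h'' <;> rw [h', h''] <;> norm_num
    · rw [if_neg h, mul_zero]; left; rfl
  · intro j k hjk hh
    have h0 := key j k hjk (hh.1.trans hh.2.symm)
    rw [hh.1] at h0; norm_num at h0
  · intro j k hjk hh
    have h0 := key j k hjk (hh.1.trans hh.2.symm)
    rw [hh.1] at h0; norm_num at h0
lemma ehr_one (Q : Set (Fin n → ℝ)) :
    ehrCount Q 1 = {x : Fin n → ℤ | (fun v => (x v : ℝ)) ∈ Q}.ncard := by
  unfold ehrCount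
  congr 1
  ext x
  simp only [Set.mem_setOf_eq, Nat.cast_one, one_mul]
  constructor
  · rintro ⟨q, hq, he⟩
    have : (fun v => (x v : ℝ)) = q := funext fun i => he i
    rw [this]; exact hq
  · intro hx; exact ⟨_, hx, fun i => rfl⟩

lemma singleton_chain (P : Set (Fin n → ℝ)) (v : Fin n) :
    IsSChain P 0 (fun _ => v) (fun i => i.elim0) := by
  exact ⟨fun i => i.elim0, fun i => i.elim0, fun i => i.elim0, fun i h => i.elim0⟩

lemma chainFun_singleton (v : Fin n) (y : Fin n → ℝ) :
    chainFun (fun _ : Fin 1 => v) (fun i : Fin 0 => i.elim0) y = y v := by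
  unfold chainFun
  simp

lemma counts_differ (hP : IsSignedPoset P) (i : Fin n) (σ : ℤ) (hσ : σ = 1 ∨ σ = -1)
    (hmem : ((σ : ℝ)) • ee n i ∈ P) :
    ehrCount (orderPolytope P) 1 < ehrCount (chainPolytope P) 1 := by
  rw [ehr_one, ehr_one]
  set SO := {x : Fin n → ℤ | (fun v => (x v : ℝ)) ∈ orderPolytope P} with hSO
  set SC := {x : Fin n → ℤ | (fun v => (x v : ℝ)) ∈ chainPolytope P} with hSC
  have hmemO : ∀ x ∈ SO, (∀ α ∈ P, 0 ≤ dot α (fun v => (x v : ℝ))) ∧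
      (∀ v, x v = 0 ∨ x v = 1 ∨ x v = -1) := by
    intro x hx
    obtain ⟨hdot, hcube⟩ := hx
    refine ⟨hdot, fun v => ?_⟩
    have h1 := (hcube v).1
    have h2 := (hcube v).2
    simp only at h1 h2
    have h1' : -1 ≤ x v := by exact_mod_cast h1
    have h2' : x v ≤ 1 := by exact_mod_cast h2
    omega
  have hfinC : SC.Finite := by
    apply Set.Finite.subset (Set.Finite.pi (fun _ : Fin n => Set.finite_Icc (-1 : ℤ) 1))
    intro x hx
    rw [Set.mem_pi]
    intro v _
    rw [Set.mem_Icc]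
    have := hx 0 (fun _ => v) (fun i => i.elim0) (singleton_chain P v)
    rw [chainFun_singleton] at this
    have h1 : -1 ≤ x v := by exact_mod_cast this.1
    have h2 : x v ≤ 1 := by exact_mod_cast this.2
    exact ⟨h1, h2⟩
  have himg : (TZ P) '' SO ⊆ SC := by
    rintro _ ⟨x, hx, rfl⟩
    exact TZ_mem_C hP (hmemO x hx).2
  have hinj : Set.InjOn (TZ P) SO := by
    intro x hx x' hx' he
    obtain ⟨hK, hx01⟩ := hmemO x hx
    obtain ⟨hK', hx01'⟩ := hmemO x' hx'
    funext v
    have e1 : x v = 1 ↔ x' v = 1 := by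
      rw [recon hP hx01 hK v 1 (Or.inl rfl), recon hP hx01' hK' v 1 (Or.inl rfl), he]
    have e2 : x v = -1 ↔ x' v = -1 := by
      rw [recon hP hx01 hK v (-1) (Or.inr rfl), recon hP hx01' hK' v (-1) (Or.inr rfl), he]
    rcases hx01 v with h | h | h <;> rcases hx01' v with h' | h' | h' <;> omega
  set g : Fin n → ℤ := fun v => if v = i then -σ else 0 with hg
  have hgC : g ∈ SC := by
    rw [hSC]
    exact gstar_mem_C hP i σ hσ
  have hgnot : g ∉ (TZ P) '' SO := by
    rintro ⟨x, hx, hTx⟩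
    obtain ⟨hK, hx01⟩ := hmemO x hx
    have hTi : TZ P x i = -σ := by rw [hTx, hg]; simp
    have hTi0 : TZ P x i ≠ 0 := by rw [hTi]; rcases hσ with h | h <;> omega
    rcases TZ_cases P x i with h | h
    · exact hTi0 h
    · have hxi : x i = -σ := by rw [← h.2, hTi]
      have hdot := hK _ hmem
      rw [dot_smul', dot_ee_apply] at hdot
      have : ((x i : ℤ) : ℝ) = -(σ : ℝ) := by rw [hxi]; push_cast; ring
      rw [this] at hdot
      rcases hσ with h' | h' <;> rw [h'] at hdot <;> norm_num at hdot
  have hss : (TZ P) '' SO ⊂ SC := (Set.ssubset_iff_of_subset himg).mpr ⟨g, hgC, hgnot⟩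
  calc SO.ncard = ((TZ P) '' SO).ncard := (Set.ncard_image_of_injOn hinj).symm
    _ < SC.ncard := Set.ncard_lt_ncard hss hfinC
end Master

/-- if `P` contains some `±e_i`, then `O_P` has no interior lattice
points, while the origin is interior to `C_P`; in particular the Ehrhart polynomials
of `O_P` and `C_P` differ. -/
theorem stmt19 {n : ℕ} (P : Set (Fin n → ℝ)) (hP : IsSignedPoset P)
    (h : ∃ i : Fin n, ee n i ∈ P ∨ -ee n i ∈ P) :
    {x : Fin n → ℤ | (fun i => (x i : ℝ)) ∈ interior (orderPolytope P)} = ∅ ∧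
    (fun _ : Fin n => (0 : ℝ)) ∈ interior (chainPolytope P) ∧
    ∃ t : ℕ, 0 < t ∧ ehrCount (orderPolytope P) t ≠ ehrCount (chainPolytope P) t := by
  obtain ⟨i, hi⟩ := h
  have hn : 0 < n := i.pos
  have hσex : ∃ σ : ℤ, (σ = 1 ∨ σ = -1) ∧ ((σ : ℤ) : ℝ) • ee n i ∈ P := by
    rcases hi with hi | hi
    · refine ⟨1, Or.inl rfl, ?_⟩
      simpa using hi
    · refine ⟨-1, Or.inr rfl, ?_⟩
      have : (((-1 : ℤ) : ℝ)) • ee n i = -ee n i := by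
        push_cast
        rw [neg_smul, one_smul]
      rw [this]
      exact hi
  obtain ⟨σ, hσpm, hσmem⟩ := hσex
  have hσpm' : ((σ : ℤ) : ℝ) = 1 ∨ ((σ : ℤ) : ℝ) = -1 := by
    rcases hσpm with h | h <;> rw [h] <;> [left; right] <;> norm_num
  exact ⟨no_interior_pts hP i hσpm' hσmem, origin_mem_interior hP hn, 1, one_pos,
    ne_of_lt (counts_differ hP i σ hσpm hσmem)⟩
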